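/- Let u = (u1,u2,u3) be a unit vector in ℝ³ with u1 ≥ 0 satisfying P(u) = 1/3, where P is as below. Then √3 u1 + u2 = 1 (the alternative √3 u1 + u2 = -2 is excluded), and consequently (1 - (4/√3) u1)² + ((2/√3) u3)² = 1. -/
import Mathlib


/-- If |u| = 1, u1 ≥ 0 and P(u) = 1/3 then √3 u1 + u2 = 1, and consequently
    (1 - (4/√3)u1)² + ((2/√3)u3)² = 1. -/
theorem sqrt3u1_add_u2_eq_one (P : ℝ → ℝ → ℝ → ℝ)
    (hP : ∀ v1 v2 v3 : ℝ, P v1 v2 v3 =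
      -v2 * v1 ^ 2 + (Real.sqrt 3 / 2) * v1 * v3 ^ 2 + (1 / 3) * v2 ^ 3 + (1 / 2) * v2 * v3 ^ 2)
    (u1 u2 u3 : ℝ) (hunit : u1 ^ 2 + u2 ^ 2 + u3 ^ 2 = 1)
    (hnonneg : 0 ≤ u1) (hmax : P u1 u2 u3 = 1 / 3) :
    Real.sqrt 3 * u1 + u2 = 1 ∧
      (1 - (4 / Real.sqrt 3) * u1) ^ 2 + ((2 / Real.sqrt 3) * u3) ^ 2 = 1 := by
  rw [hP] at hmax
  set r := Real.sqrt 3 with hr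
  have h3 : r ^ 2 = 3 := Real.sq_sqrt (by norm_num)
  have hrpos : 0 < r := Real.sqrt_pos.mpr (by norm_num)
  have key : (r * u1 + u2 - 1) ^ 2 * (r * u1 + u2 + 2) = 0 := by
    linear_combination (r * u1 ^ 3 + 3 * u1 ^ 2 * u2) * h3 +
      (3 * r * u1 + 3 * u2) * hunit - 6 * hmax
  have hu2 : -1 ≤ u2 := by nlinarith [sq_nonneg u1, sq_nonneg u3, sq_nonneg (u2 + 1)]
  have hs : r * u1 + u2 = 1 := by
    have hpos : 0 < r * u1 + u2 + 2 := by nlinarith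
    have : (r * u1 + u2 - 1) ^ 2 = 0 := by
      rcases mul_eq_zero.mp key with h | h
      · exact h
      · linarith
    nlinarith [this]
  refine ⟨hs, ?_⟩
  have hrne : r ≠ 0 := ne_of_gt hrpos
  have hu2v : u2 = 1 - r * u1 := by linarith
  subst hu2v
  have hu3 : u3 ^ 2 = 2 * r * u1 - 4 * u1 ^ 2 := by
    linear_combination hunit - u1 ^ 2 * h3
  field_simp
  linear_combination 4 * hu3
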